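/- Let γ : ℝ → ℝ² satisfy |γ(s) − γ(s')| ≤ |s − s'| for all s, s' ∈ ℝ and assumption (a1) with constant c ∈ (0,1), and let κ > 0. Then there is a constant C > 0 such that for all s ≠ s': 0 ≤ K₀(κ |γ(s) − γ(s')|) − K₀(κ |s − s'|) ≤ C e^{−c κ |s − s'| / 2}. In particular the kernel D_κ(s,s') = K₀(κ|γ(s) − γ(s')|) − K₀(κ|s − s'|) is nonnegative and bounded. -/

import Mathlib

open MeasureTheory Real

/-- The Macdonald function `K₀` (modified Bessel function of the second kind, order zero),
`K₀(x) = ∫₀^∞ exp(−x cosh t) dt` for `x > 0`. -/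
noncomputable def K0 (x : ℝ) : ℝ := ∫ t in Set.Ioi (0 : ℝ), Real.exp (-x * Real.cosh t)

/-- The plane `ℝ²` with its Euclidean norm. -/
abbrev Plane := EuclideanSpace ℝ (Fin 2)

open Set Filter Topology

lemma lt_cosh {t : ℝ} (ht : 0 < t) : t < Real.cosh t :=
  lt_of_lt_of_le (Real.self_lt_sinh_iff.2 ht)
    (by nlinarith [Real.cosh_sub_sinh t, Real.exp_pos (-t)])

lemma K0_integrableOn {x : ℝ} (hx : 0 < x) :
    IntegrableOn (fun t : ℝ => Real.exp (-x * Real.cosh t)) (Ioi 0) := by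
  refine (exp_neg_integrableOn_Ioi 0 hx).mono' ?_ ?_
  · exact (Real.continuous_exp.comp ((continuous_const.mul Real.continuous_cosh))).aestronglyMeasurable
  · filter_upwards [ae_restrict_mem measurableSet_Ioi] with t ht
    rw [Real.norm_eq_abs, abs_of_pos (Real.exp_pos _)]
    apply Real.exp_le_exp.2
    nlinarith [lt_cosh ht.out]

lemma exp_half_le_cosh (t : ℝ) : Real.exp t / 2 ≤ Real.cosh t := by
  rw [Real.cosh_eq]; nlinarith [Real.exp_pos (-t)]

lemma exp_sub_exp_le {p q : ℝ} (hp : 0 ≤ p) (hpq : p ≤ q) :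
    Real.exp (-p) - Real.exp (-q) ≤ q - p := by
  have h1 := Real.add_one_le_exp (-(q - p))
  have h2 : Real.exp (-q) = Real.exp (-p) * Real.exp (-(q - p)) := by
    rw [← Real.exp_add]; ring_nf
  have h3 : Real.exp (-p) ≤ 1 := Real.exp_le_one_iff.2 (by linarith)
  nlinarith [Real.exp_pos (-p), Real.exp_pos (-(q - p))]

lemma integral_exp_neg_mul_Ioi {μ : ℝ} (hμ : 0 < μ) (a : ℝ) :
    ∫ t in Ioi a, Real.exp (-μ * t) = Real.exp (-μ * a) / μ := by
  have hderiv : ∀ x ∈ Ici a, HasDerivAt (fun t => -Real.exp (-μ * t) / μ)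
      (Real.exp (-μ * x)) x := by
    intro x _
    have h := (((hasDerivAt_id x).const_mul (-μ)).exp.neg).div_const μ
    simp only [id_eq, mul_one] at h
    convert h using 1
    · rfl
    · rfl
    · rfl
    · rw [eq_div_iff hμ.ne']; ring
  have htend : Tendsto (fun t => -Real.exp (-μ * t) / μ) atTop (𝓝 0) := by
    have : Tendsto (fun t : ℝ => Real.exp (-μ * t)) atTop (𝓝 0) :=
      Real.tendsto_exp_atBot.comp (tendsto_id.const_mul_atTop_of_neg (by linarith))
    simpa using (this.neg).div_const μ
  have := integral_Ioi_of_hasDerivAt_of_tendsto' hderiv (exp_neg_integrableOn_Ioi a hμ) htend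
  rw [this]; field_simp; ring

lemma G_bound {c b : ℝ} (hc0 : 0 < c) (hc1 : c < 1) (hb0 : 0 < b) (hb1 : b ≤ 1) :
    K0 (c * b) - K0 b ≤ 1 + (1 - c) / c := by
  set δ := (1 - c) * b with hδdef
  have hδ0 : 0 < δ := mul_pos (by linarith) hb0
  have hδ1 : δ ≤ 1 := by nlinarith
  set T := Real.log (2 / δ) with hTdef
  have h2δ : (1 : ℝ) < 2 / δ := by rw [lt_div_iff₀ hδ0]; linarith
  have hT0 : 0 < T := Real.log_pos h2δ
  have hexpT : Real.exp T = 2 / δ := Real.exp_log (by linarith)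
  have hcb : 0 < c * b := mul_pos hc0 hb0
  set μ := c / (1 - c) with hμdef
  have hμ0 : 0 < μ := div_pos hc0 (by linarith)
  -- the difference as one integral
  have hsub : K0 (c * b) - K0 b =
      ∫ t in Ioi (0 : ℝ), (Real.exp (-(c * b) * Real.cosh t) - Real.exp (-b * Real.cosh t)) :=
    (integral_sub (K0_integrableOn hcb) (K0_integrableOn hb0)).symm
  have hfint : IntegrableOn
      (fun t : ℝ => Real.exp (-(c * b) * Real.cosh t) - Real.exp (-b * Real.cosh t)) (Ioi 0) :=
    (K0_integrableOn hcb).sub (K0_integrableOn hb0)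
  have hsplitset : Ioc (0 : ℝ) T ∪ Ioi T = Ioi 0 := Ioc_union_Ioi_eq_Ioi hT0.le
  have hf1 : IntegrableOn
      (fun t : ℝ => Real.exp (-(c * b) * Real.cosh t) - Real.exp (-b * Real.cosh t)) (Ioc 0 T) :=
    hfint.mono_set (by rw [← hsplitset]; exact subset_union_left)
  have hf2 : IntegrableOn
      (fun t : ℝ => Real.exp (-(c * b) * Real.cosh t) - Real.exp (-b * Real.cosh t)) (Ioi T) :=
    hfint.mono_set (by rw [← hsplitset]; exact subset_union_right)
  have hsplit : K0 (c * b) - K0 b =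
      (∫ t in Ioc (0 : ℝ) T, (Real.exp (-(c * b) * Real.cosh t) - Real.exp (-b * Real.cosh t)))
      + ∫ t in Ioi T, (Real.exp (-(c * b) * Real.cosh t) - Real.exp (-b * Real.cosh t)) := by
    rw [hsub, ← hsplitset,
      setIntegral_union (Ioc_disjoint_Ioi le_rfl) measurableSet_Ioi hf1 hf2]
  -- part 1
  have hpart1 : (∫ t in Ioc (0 : ℝ) T,
      (Real.exp (-(c * b) * Real.cosh t) - Real.exp (-b * Real.cosh t))) ≤ 1 := by
    have hmono : (∫ t in Ioc (0 : ℝ) T,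
        (Real.exp (-(c * b) * Real.cosh t) - Real.exp (-b * Real.cosh t)))
        ≤ ∫ t in Ioc (0 : ℝ) T, δ * Real.cosh t := by
      refine setIntegral_mono_on hf1
        ((continuous_const.mul Real.continuous_cosh).integrableOn_Ioc) measurableSet_Ioc
        fun t _ => ?_
      have h := exp_sub_exp_le (p := c * b * Real.cosh t) (q := b * Real.cosh t)
        (by positivity) (by nlinarith [Real.cosh_pos t])
      have : -(c * b) * Real.cosh t = -(c * b * Real.cosh t) := by ring
      rw [this]
      have : -b * Real.cosh t = -(b * Real.cosh t) := by ring
      rw [this]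
      have hδc : δ * Real.cosh t = b * Real.cosh t - c * b * Real.cosh t := by
        rw [hδdef]; ring
      linarith
    have hcalc : (∫ t in Ioc (0 : ℝ) T, δ * Real.cosh t) = δ * Real.sinh T := by
      rw [← intervalIntegral.integral_of_le hT0.le, intervalIntegral.integral_const_mul]
      have : (∫ t in (0:ℝ)..T, Real.cosh t) = Real.sinh T - Real.sinh 0 :=
        intervalIntegral.integral_eq_sub_of_hasDerivAt
          (fun x _ => Real.hasDerivAt_sinh x)
          (Real.continuous_cosh.intervalIntegrable 0 T)
      rw [this, Real.sinh_zero, sub_zero]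
    have hsinh : Real.sinh T ≤ 1 / δ := by
      have := exp_half_le_cosh T
      have h2 : Real.sinh T ≤ Real.exp T / 2 := by
        rw [Real.sinh_eq]; nlinarith [Real.exp_pos (-T)]
      rw [hexpT] at h2
      calc Real.sinh T ≤ 2 / δ / 2 := h2
        _ = 1 / δ := by ring
    have h1 := hmono.trans (le_of_eq hcalc)
    have h2 := mul_le_mul_of_nonneg_left hsinh hδ0.le
    rw [mul_one_div, div_self hδ0.ne'] at h2
    linarith
  -- part 2
  have hpart2 : (∫ t in Ioi T,
      (Real.exp (-(c * b) * Real.cosh t) - Real.exp (-b * Real.cosh t))) ≤ (1 - c) / c := by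
    have hmono : (∫ t in Ioi T,
        (Real.exp (-(c * b) * Real.cosh t) - Real.exp (-b * Real.cosh t)))
        ≤ ∫ t in Ioi T, Real.exp (-μ + μ * T) * Real.exp (-μ * t) := by
      refine setIntegral_mono_on hf2
        (((exp_neg_integrableOn_Ioi T hμ0).const_mul _)) measurableSet_Ioi fun t ht => ?_
      have ht' : T ≤ t := le_of_lt ht
      -- cosh t ≥ (1/δ)(1 + (t - T))
      have hcosh : (1 / δ) * (1 + (t - T)) ≤ Real.cosh t := by
        have h1 : Real.exp t / 2 ≤ Real.cosh t := exp_half_le_cosh t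
        have h2 : Real.exp t = Real.exp T * Real.exp (t - T) := by
          rw [← Real.exp_add]; ring_nf
        have h3 : 1 + (t - T) ≤ Real.exp (t - T) := by
          have := Real.add_one_le_exp (t - T); linarith
        rw [hexpT] at h2
        have h5 : 2 / δ * (1 + (t - T)) ≤ Real.exp t := by
          rw [h2]
          have h6 : (0:ℝ) ≤ 2 / δ := by positivity
          nlinarith
        have h7 : 1 / δ * (1 + (t - T)) = (2 / δ * (1 + (t - T))) / 2 := by ring
        linarith
      have hcbδ : c * b * (1 / δ) = μ := by
        have h1c : (1:ℝ) - c ≠ 0 := by linarith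
        rw [hδdef, hμdef]
        field_simp
      have hkey : μ * (1 + (t - T)) ≤ c * b * Real.cosh t := by
        calc μ * (1 + (t - T)) = c * b * ((1 / δ) * (1 + (t - T))) := by
              rw [← hcbδ]; ring
          _ ≤ c * b * Real.cosh t := by
              have h1T : (0:ℝ) ≤ 1 + (t - T) := by linarith
              nlinarith
      have hexp2 : Real.exp (-(c * b) * Real.cosh t) ≤
          Real.exp (-μ + μ * T) * Real.exp (-μ * t) := by
        rw [← Real.exp_add]
        apply Real.exp_le_exp.2
        nlinarith
      nlinarith [Real.exp_pos (-b * Real.cosh t)]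
    rw [integral_const_mul, integral_exp_neg_mul_Ioi hμ0] at hmono
    have : Real.exp (-μ + μ * T) * (Real.exp (-μ * T) / μ) = Real.exp (-μ) / μ := by
      rw [← mul_div_assoc, ← Real.exp_add]
      ring_nf
    rw [this] at hmono
    have hexpμ : Real.exp (-μ) ≤ 1 := Real.exp_le_one_iff.2 (by linarith)
    have h1μ : Real.exp (-μ) / μ ≤ 1 / μ := by
      gcongr
    have h2μ : 1 / μ = (1 - c) / c := by
      rw [hμdef, one_div_div]
    linarith [hmono, h1μ.trans_eq h2μ]
  linarith [hsplit, hpart1, hpart2]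

lemma K0_nonneg (x : ℝ) : 0 ≤ K0 x :=
  setIntegral_nonneg measurableSet_Ioi fun t _ => (Real.exp_pos _).le

lemma K0_mono {x y : ℝ} (hx : 0 < x) (hxy : x ≤ y) : K0 y ≤ K0 x := by
  refine setIntegral_mono_on (K0_integrableOn (hx.trans_le hxy)) (K0_integrableOn hx)
    measurableSet_Ioi fun t _ => ?_
  apply Real.exp_le_exp.2
  nlinarith [Real.one_le_cosh t]

lemma K0_le_exp {x : ℝ} (hx : 0 < x) : K0 x ≤ Real.exp (-x / 2) * K0 (x / 2) := by
  have h : K0 x ≤ ∫ t in Ioi (0 : ℝ), Real.exp (-x / 2) * Real.exp (-(x / 2) * Real.cosh t) := by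
    refine setIntegral_mono_on (K0_integrableOn hx)
      ((K0_integrableOn (by linarith)).const_mul _) measurableSet_Ioi fun t _ => ?_
    rw [← Real.exp_add]
    apply Real.exp_le_exp.2
    nlinarith [Real.one_le_cosh t]
  rwa [integral_const_mul] at h


/-- **Pointwise bound on the kernel difference.** If `γ` is 1-Lipschitz and satisfies (a1)
with constant `c ∈ (0,1)`, then for `κ > 0` there is `C > 0` such that for all `s ≠ s'`,
`0 ≤ K₀(κ|γ(s)−γ(s')|) − K₀(κ|s−s'|) ≤ C e^{−cκ|s−s'|/2}`; in particular the kernel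
`D_κ` is nonnegative and bounded. -/
theorem kernel_difference_pointwise_bound
    (γ : ℝ → Plane)
    (hLip : ∀ s s' : ℝ, ‖γ s - γ s'‖ ≤ |s - s'|)
    (c : ℝ) (hc0 : 0 < c) (hc1 : c < 1)
    (ha1 : ∀ s s' : ℝ, c * |s - s'| ≤ ‖γ s - γ s'‖)
    (κ : ℝ) (hκ : 0 < κ) :
    ∃ C : ℝ, 0 < C ∧ ∀ s s' : ℝ, s ≠ s' →
      0 ≤ K0 (κ * ‖γ s - γ s'‖) - K0 (κ * |s - s'|) ∧
      K0 (κ * ‖γ s - γ s'‖) - K0 (κ * |s - s'|) ≤ C * Real.exp (-c * κ * |s - s'| / 2) := by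
  have h1c : 0 ≤ (1 - c) / c := div_nonneg (by linarith) hc0.le
  have hE : 0 < (1 + (1 - c) / c) * Real.exp (1 / 2) :=
    mul_pos (by linarith) (Real.exp_pos _)
  refine ⟨K0 (c / 2) + (1 + (1 - c) / c) * Real.exp (1 / 2),
    add_pos_of_nonneg_of_pos (K0_nonneg _) hE, fun s s' hss => ?_⟩
  set d := |s - s'| with hd
  have hd0 : 0 < d := abs_pos.2 (sub_ne_zero.2 hss)
  set b := κ * d with hbdef
  have hb0 : 0 < b := mul_pos hκ hd0
  set a := κ * ‖γ s - γ s'‖ with hadef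
  have hcb : 0 < c * b := mul_pos hc0 hb0
  have hcba : c * b ≤ a := by
    calc c * b = κ * (c * d) := by ring
      _ ≤ κ * ‖γ s - γ s'‖ := by
          exact mul_le_mul_of_nonneg_left (ha1 s s') hκ.le
  have ha0 : 0 < a := hcb.trans_le hcba
  have hab : a ≤ b := mul_le_mul_of_nonneg_left (hLip s s') hκ.le
  have hK0ab : K0 b ≤ K0 a := K0_mono ha0 hab
  refine ⟨by linarith, ?_⟩
  have hKa : K0 a ≤ K0 (c * b) := K0_mono hcb hcba
  have hexparg : -c * κ * d / 2 = -(c * b) / 2 := by rw [hbdef]; ring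
  rcases le_or_gt b 1 with hb1 | hb1
  · -- small b : uniform bound
    have hG : K0 (c * b) - K0 b ≤ 1 + (1 - c) / c := G_bound hc0 hc1 hb0 hb1
    have hcb2 : -(c * b) / 2 ≥ -(1 : ℝ) / 2 := by nlinarith
    have hexp : Real.exp (-(1 : ℝ) / 2) ≤ Real.exp (-(c * b) / 2) := Real.exp_le_exp.2 (by linarith)
    have hEe : (1 + (1 - c) / c) ≤
        (1 + (1 - c) / c) * Real.exp (1 / 2) * Real.exp (-(c * b) / 2) := by
      have h1 : (1 + (1 - c) / c) * Real.exp (1 / 2) * Real.exp (-(1 : ℝ) / 2)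
          = (1 + (1 - c) / c) := by
        rw [mul_assoc, ← Real.exp_add]
        norm_num
      have h2 : (0:ℝ) ≤ (1 + (1 - c) / c) * Real.exp (1 / 2) := hE.le
      nlinarith
    rw [hexparg]
    have hterm : 0 ≤ K0 (c / 2) * Real.exp (-(c * b) / 2) :=
      mul_nonneg (K0_nonneg _) (Real.exp_pos _).le
    calc K0 a - K0 b ≤ K0 (c * b) - K0 b := by linarith
      _ ≤ 1 + (1 - c) / c := hG
      _ ≤ (1 + (1 - c) / c) * Real.exp (1 / 2) * Real.exp (-(c * b) / 2) := hEe
      _ ≤ (K0 (c / 2) + (1 + (1 - c) / c) * Real.exp (1 / 2)) * Real.exp (-(c * b) / 2) := by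
          nlinarith
  · -- large b : exponential decay of K0
    have hKb : 0 ≤ K0 b := K0_nonneg b
    have h1 : K0 (c * b) ≤ Real.exp (-(c * b) / 2) * K0 (c * b / 2) := K0_le_exp hcb
    have h2 : K0 (c * b / 2) ≤ K0 (c / 2) :=
      K0_mono (by positivity) (by nlinarith)
    rw [hexparg]
    have hexppos : (0:ℝ) < Real.exp (-(c * b) / 2) := Real.exp_pos _
    calc K0 a - K0 b ≤ K0 (c * b) := by linarith
      _ ≤ Real.exp (-(c * b) / 2) * K0 (c / 2) := by nlinarith
      _ ≤ (K0 (c / 2) + (1 + (1 - c) / c) * Real.exp (1 / 2)) * Real.exp (-(c * b) / 2) := by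
          nlinarith
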